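/- Any collection of Boolean vectors (q*(1),...,q*(k)) minimizing the modified polynomial Q over ({0,1}^V)^k (where Q is obtained from P by replacing the quadratic terms xᵢ(τ)xᵢ(l) in the second sum by xᵢ(l)) necessarily satisfies q*(1) ≥ q*(2) ≥ ... ≥ q*(k) coordinatewise. -/

import Mathlib

open Finset

/-- A Boolean vector has coordinates 0 or 1. -/
def IsBool {V : Type} (b : V → ℝ) : Prop := ∀ i, b i = 0 ∨ b i = 1

/-- The Gaussian energy on integer label vectors. -/
noncomputable def U2 {V : Type} [Fintype V] (f : V → ℤ) (lam : V → ℝ)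
    (beta : V → V → ℝ) (mm : V → ℤ) : ℝ :=
  ∑ i, lam i * ((f i : ℝ) - (mm i : ℝ)) ^ 2 + ∑ i, ∑ j, beta i j * ((mm i : ℝ) - (mm j : ℝ)) ^ 2

/-- The Boolean polynomial P arising from the Gaussian energy. -/
noncomputable def Ppoly {V : Type} [Fintype V] (k : ℕ) (f : V → ℤ) (m : ℕ → ℤ)
    (lam : V → ℝ) (beta : V → V → ℝ) (x : ℕ → V → ℝ) : ℝ :=
  (∑ i, ∑ l ∈ Finset.Icc 1 k,
      (lam i * ((m l : ℝ) - (m (l - 1) : ℝ)) ^ 2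
        - 2 * lam i * ((f i : ℝ) - (m 0 : ℝ)) * ((m l : ℝ) - (m (l - 1) : ℝ))
        - ((m l : ℝ) - (m (l - 1) : ℝ)) * ((m k : ℝ) - (m 0 : ℝ) - ((m l : ℝ) - (m (l - 1) : ℝ)))
            * ∑ j, (beta i j + beta j i)) * x l i)
  + 2 * ∑ i, (lam i + ∑ j, (beta i j + beta j i)) *
      ∑ l ∈ Finset.Icc 1 k, ∑ τ ∈ Finset.Icc 1 (l - 1),
        ((m l : ℝ) - (m (l - 1) : ℝ)) * ((m τ : ℝ) - (m (τ - 1) : ℝ)) * (x τ i * x l i)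
  + ∑ i, ∑ j, beta i j *
      ((∑ l ∈ Finset.Icc 1 k, ((m l : ℝ) - (m (l - 1) : ℝ)) ^ 2 * (x l i - x l j) ^ 2)
        + ∑ l ∈ Finset.Icc 1 k, ∑ τ ∈ (Finset.Icc 1 k).erase l,
            ((m l : ℝ) - (m (l - 1) : ℝ)) * ((m τ : ℝ) - (m (τ - 1) : ℝ)) *
              ((x l i - x τ j) ^ 2 + (x l j - x τ i) ^ 2))

/-- The modified polynomial Q, in which the cross terms x_i(τ)x_i(l) of P are
replaced by x_i(l). -/
noncomputable def Qpoly {V : Type} [Fintype V] (k : ℕ) (f : V → ℤ) (m : ℕ → ℤ)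
    (lam : V → ℝ) (beta : V → V → ℝ) (x : ℕ → V → ℝ) : ℝ :=
  (∑ i, ∑ l ∈ Finset.Icc 1 k,
      (lam i * ((m l : ℝ) - (m (l - 1) : ℝ)) ^ 2
        - 2 * lam i * ((f i : ℝ) - (m 0 : ℝ)) * ((m l : ℝ) - (m (l - 1) : ℝ))
        - ((m l : ℝ) - (m (l - 1) : ℝ)) * ((m k : ℝ) - (m 0 : ℝ) - ((m l : ℝ) - (m (l - 1) : ℝ)))
            * ∑ j, (beta i j + beta j i)) * x l i)
  + 2 * ∑ i, (lam i + ∑ j, (beta i j + beta j i)) *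
      ∑ l ∈ Finset.Icc 1 k, ∑ τ ∈ Finset.Icc 1 (l - 1),
        ((m l : ℝ) - (m (l - 1) : ℝ)) * ((m τ : ℝ) - (m (τ - 1) : ℝ)) * x l i
  + ∑ i, ∑ j, beta i j *
      ((∑ l ∈ Finset.Icc 1 k, ((m l : ℝ) - (m (l - 1) : ℝ)) ^ 2 * (x l i - x l j) ^ 2)
        + ∑ l ∈ Finset.Icc 1 k, ∑ τ ∈ (Finset.Icc 1 k).erase l,
            ((m l : ℝ) - (m (l - 1) : ℝ)) * ((m τ : ℝ) - (m (τ - 1) : ℝ)) *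
              ((x l i - x τ j) ^ 2 + (x l j - x τ i) ^ 2))
open Finset

namespace St16
set_option linter.unusedSectionVars false

variable {V : Type} [Fintype V] [DecidableEq V]

/-- The label increments. -/
noncomputable def aa (m : ℕ → ℤ) (t : ℕ) : ℝ := (m t : ℝ) - (m (t - 1) : ℝ)

/-- The linear coefficients of the first part of Q. -/
noncomputable def KK (k : ℕ) (f : V → ℤ) (m : ℕ → ℤ) (lam : V → ℝ) (beta : V → V → ℝ)
    (i : V) (l : ℕ) : ℝ :=
  lam i * aa m l ^ 2 - 2 * lam i * ((f i : ℝ) - (m 0 : ℝ)) * aa m l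
    - aa m l * ((m k : ℝ) - (m 0 : ℝ) - aa m l) * ∑ j, (beta i j + beta j i)

/-- The pairwise interaction term of Q for a pair of sites. -/
noncomputable def Tpair (k : ℕ) (m : ℕ → ℤ) (u v : ℕ → ℝ) : ℝ :=
  (∑ l ∈ Finset.Icc 1 k, aa m l ^ 2 * (u l - v l) ^ 2)
  + ∑ l ∈ Finset.Icc 1 k, ∑ τ ∈ (Finset.Icc 1 k).erase l,
      aa m l * aa m τ * ((u l - v τ) ^ 2 + (v l - u τ) ^ 2)

noncomputable def dd (k : ℕ) (m : ℕ → ℤ) (t : ℕ) (s : ℝ) (v : ℕ → ℝ) : ℝ :=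
  aa m t ^ 2 * (s - 2 * v t) + 2 * ∑ τ ∈ (Finset.Icc 1 k).erase t, aa m t * aa m τ * (s - 2 * v τ)

lemma Qpoly_eq (k : ℕ) (f : V → ℤ) (m : ℕ → ℤ) (lam : V → ℝ) (beta : V → V → ℝ)
    (x : ℕ → V → ℝ) :
    Qpoly k f m lam beta x =
      (∑ i, ∑ l ∈ Finset.Icc 1 k, KK k f m lam beta i l * x l i)
      + 2 * ∑ i, (lam i + ∑ j, (beta i j + beta j i)) *
          ∑ l ∈ Finset.Icc 1 k, ∑ τ ∈ Finset.Icc 1 (l - 1), aa m l * aa m τ * x l i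
      + ∑ i, ∑ j, beta i j * Tpair k m (fun l => x l i) (fun l => x l j) := rfl

lemma Tpair_symm (k : ℕ) (m : ℕ → ℤ) (u v : ℕ → ℝ) : Tpair k m u v = Tpair k m v u := by
  unfold Tpair
  congr 1
  · exact Finset.sum_congr rfl fun l _ => by ring
  · exact Finset.sum_congr rfl fun l _ => Finset.sum_congr rfl fun τ _ => by ring

lemma Tpair_update (k : ℕ) (m : ℕ → ℤ) (u v : ℕ → ℝ) (t : ℕ) (ht : t ∈ Finset.Icc 1 k)
    (c : ℝ) :
    Tpair k m (Function.update u t c) v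
      = Tpair k m u v + (c - u t) * dd k m t (c + u t) v := by
  unfold Tpair dd
  have h1 : ∑ l ∈ Finset.Icc 1 k, aa m l ^ 2 * (Function.update u t c l - v l) ^ 2
      = (∑ l ∈ Finset.Icc 1 k, aa m l ^ 2 * (u l - v l) ^ 2)
        + (c - u t) * (aa m t ^ 2 * (c + u t - 2 * v t)) := by
    rw [← Finset.add_sum_erase _ _ ht, ← Finset.add_sum_erase _ (fun l => aa m l ^ 2 * (u l - v l) ^ 2) ht]
    have e : ∀ l ∈ (Finset.Icc 1 k).erase t,
        aa m l ^ 2 * (Function.update u t c l - v l) ^ 2 = aa m l ^ 2 * (u l - v l) ^ 2 := by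
      intro l hl
      rw [Function.update_of_ne (Finset.ne_of_mem_erase hl)]
    rw [Finset.sum_congr rfl e, Function.update_self]
    ring
  have h2 : ∑ l ∈ Finset.Icc 1 k, ∑ τ ∈ (Finset.Icc 1 k).erase l,
        aa m l * aa m τ * ((Function.update u t c l - v τ) ^ 2 + (v l - Function.update u t c τ) ^ 2)
      = (∑ l ∈ Finset.Icc 1 k, ∑ τ ∈ (Finset.Icc 1 k).erase l,
          aa m l * aa m τ * ((u l - v τ) ^ 2 + (v l - u τ) ^ 2))
        + (c - u t) * (2 * ∑ τ ∈ (Finset.Icc 1 k).erase t, aa m t * aa m τ * (c + u t - 2 * v τ)) := by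
    have hsub : (∑ l ∈ Finset.Icc 1 k, ∑ τ ∈ (Finset.Icc 1 k).erase l,
          aa m l * aa m τ * ((Function.update u t c l - v τ) ^ 2 + (v l - Function.update u t c τ) ^ 2))
        - (∑ l ∈ Finset.Icc 1 k, ∑ τ ∈ (Finset.Icc 1 k).erase l,
            aa m l * aa m τ * ((u l - v τ) ^ 2 + (v l - u τ) ^ 2))
        = (c - u t) * (2 * ∑ τ ∈ (Finset.Icc 1 k).erase t, aa m t * aa m τ * (c + u t - 2 * v τ)) := by
      rw [← Finset.sum_sub_distrib]
      have step1 : ∀ l ∈ Finset.Icc 1 k,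
          ((∑ τ ∈ (Finset.Icc 1 k).erase l,
            aa m l * aa m τ * ((Function.update u t c l - v τ) ^ 2 + (v l - Function.update u t c τ) ^ 2))
          - ∑ τ ∈ (Finset.Icc 1 k).erase l,
            aa m l * aa m τ * ((u l - v τ) ^ 2 + (v l - u τ) ^ 2))
          = ∑ τ ∈ (Finset.Icc 1 k).erase l,
              (aa m l * aa m τ * ((Function.update u t c l - v τ) ^ 2 + (v l - Function.update u t c τ) ^ 2)
               - aa m l * aa m τ * ((u l - v τ) ^ 2 + (v l - u τ) ^ 2)) :=
        fun l _ => (Finset.sum_sub_distrib _ _).symm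
      rw [Finset.sum_congr rfl step1]
      rw [← Finset.add_sum_erase _ _ ht]
      have eGt : (∑ τ ∈ (Finset.Icc 1 k).erase t,
          (aa m t * aa m τ * ((Function.update u t c t - v τ) ^ 2 + (v t - Function.update u t c τ) ^ 2)
           - aa m t * aa m τ * ((u t - v τ) ^ 2 + (v t - u τ) ^ 2)))
          = ∑ τ ∈ (Finset.Icc 1 k).erase t,
              aa m t * aa m τ * ((c - v τ) ^ 2 - (u t - v τ) ^ 2) := by
        refine Finset.sum_congr rfl fun τ hτ => ?_
        rw [Function.update_self, Function.update_of_ne (Finset.ne_of_mem_erase hτ)]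
        ring
      have eGl : ∀ l ∈ (Finset.Icc 1 k).erase t,
          (∑ τ ∈ (Finset.Icc 1 k).erase l,
            (aa m l * aa m τ * ((Function.update u t c l - v τ) ^ 2 + (v l - Function.update u t c τ) ^ 2)
             - aa m l * aa m τ * ((u l - v τ) ^ 2 + (v l - u τ) ^ 2)))
          = aa m l * aa m t * ((v l - c) ^ 2 - (v l - u t) ^ 2) := by
        intro l hl
        have hlt : l ≠ t := Finset.ne_of_mem_erase hl
        have htl : t ∈ (Finset.Icc 1 k).erase l := Finset.mem_erase.mpr ⟨fun h => hlt h.symm, ht⟩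
        rw [Finset.sum_eq_single_of_mem t htl (fun τ hτ hτt => by
          rw [Function.update_of_ne hlt, Function.update_of_ne hτt]; ring)]
        rw [Function.update_of_ne hlt, Function.update_self]
        ring
      rw [eGt, Finset.sum_congr rfl eGl]
      have comb : ∀ τ ∈ (Finset.Icc 1 k).erase t,
          aa m t * aa m τ * ((c - v τ) ^ 2 - (u t - v τ) ^ 2)
            + aa m τ * aa m t * ((v τ - c) ^ 2 - (v τ - u t) ^ 2)
          = (c - u t) * (2 * (aa m t * aa m τ * (c + u t - 2 * v τ))) := fun τ _ => by ring
      rw [← Finset.sum_add_distrib, Finset.sum_congr rfl comb, ← Finset.mul_sum, ← Finset.mul_sum]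
    linarith [hsub]
  rw [h1, h2]
  ring

/-- Flipping one variable in a linear form. -/
lemma linear_flip (k : ℕ) (x : ℕ → V → ℝ) (t : ℕ) (i : V) (ht : t ∈ Finset.Icc 1 k)
    (x' : ℕ → V → ℝ) (hx' : ∀ l j, x' l j = if l = t ∧ j = i then 1 - x t i else x l j)
    (K : V → ℕ → ℝ) :
    ∑ i', ∑ l ∈ Finset.Icc 1 k, K i' l * x' l i'
      = (∑ i', ∑ l ∈ Finset.Icc 1 k, K i' l * x l i') + (1 - 2 * x t i) * K i t := by
  have per : ∀ i', (∑ l ∈ Finset.Icc 1 k, K i' l * x' l i')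
      = (∑ l ∈ Finset.Icc 1 k, K i' l * x l i')
        + (if i' = i then (1 - 2 * x t i) * K i t else 0) := by
    intro i'
    by_cases hi : i' = i
    · subst hi
      rw [if_pos rfl, ← Finset.add_sum_erase _ _ ht,
        ← Finset.add_sum_erase _ (fun l => K i' l * x l i') ht]
      have e : ∀ l ∈ (Finset.Icc 1 k).erase t, K i' l * x' l i' = K i' l * x l i' := by
        intro l hl
        rw [hx']
        simp [Finset.ne_of_mem_erase hl]
      rw [Finset.sum_congr rfl e, hx']
      simp only [and_self, if_true, if_pos]
      ring
    · rw [if_neg hi, add_zero]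
      refine Finset.sum_congr rfl fun l _ => ?_
      rw [hx']
      simp [hi]
  rw [Finset.sum_congr rfl fun i' _ => per i', Finset.sum_add_distrib,
    Finset.sum_ite_eq' Finset.univ i]
  simp

/-- The coefficient of the flipped variable. -/
noncomputable def Coef (k : ℕ) (f : V → ℤ) (m : ℕ → ℤ) (lam : V → ℝ) (beta : V → V → ℝ)
    (x : ℕ → V → ℝ) (t : ℕ) (i : V) : ℝ :=
  KK k f m lam beta i t
  + 2 * (lam i + ∑ j, (beta i j + beta j i)) * ∑ τ ∈ Finset.Icc 1 (t - 1), aa m t * aa m τ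
  + ∑ j, (beta i j + beta j i) * dd k m t 1 (fun l => x l j)

lemma flipdiff (k : ℕ) (f : V → ℤ) (m : ℕ → ℤ) (lam : V → ℝ) (beta : V → V → ℝ)
    (hdiag : ∀ i, beta i i = 0) (x : ℕ → V → ℝ) (t : ℕ) (i : V) (ht : t ∈ Finset.Icc 1 k)
    (x' : ℕ → V → ℝ) (hx' : ∀ l j, x' l j = if l = t ∧ j = i then 1 - x t i else x l j) :
    Qpoly k f m lam beta x'
      = Qpoly k f m lam beta x + (1 - 2 * x t i) * Coef k f m lam beta x t i := by
  rw [Qpoly_eq, Qpoly_eq]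
  -- part 1
  have h1 := linear_flip k x t i ht x' hx' (KK k f m lam beta)
  -- part 2
  have h2 : (2 : ℝ) * ∑ i', (lam i' + ∑ j, (beta i' j + beta j i')) *
        ∑ l ∈ Finset.Icc 1 k, ∑ τ ∈ Finset.Icc 1 (l - 1), aa m l * aa m τ * x' l i'
      = (2 * ∑ i', (lam i' + ∑ j, (beta i' j + beta j i')) *
          ∑ l ∈ Finset.Icc 1 k, ∑ τ ∈ Finset.Icc 1 (l - 1), aa m l * aa m τ * x l i')
        + (1 - 2 * x t i) *
            (2 * (lam i + ∑ j, (beta i j + beta j i)) * ∑ τ ∈ Finset.Icc 1 (t - 1), aa m t * aa m τ) := by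
    have reshape : ∀ y : ℕ → V → ℝ,
        (2 : ℝ) * ∑ i', (lam i' + ∑ j, (beta i' j + beta j i')) *
          ∑ l ∈ Finset.Icc 1 k, ∑ τ ∈ Finset.Icc 1 (l - 1), aa m l * aa m τ * y l i'
        = ∑ i', ∑ l ∈ Finset.Icc 1 k,
            (2 * (lam i' + ∑ j, (beta i' j + beta j i')) * ∑ τ ∈ Finset.Icc 1 (l - 1), aa m l * aa m τ) * y l i' := by
      intro y
      rw [Finset.mul_sum]
      refine Finset.sum_congr rfl fun i' _ => ?_
      rw [Finset.mul_sum, Finset.mul_sum]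
      refine Finset.sum_congr rfl fun l _ => ?_
      rw [← Finset.sum_mul]
      ring
    rw [reshape x', reshape x,
      linear_flip k x t i ht x' hx'
        (fun i' l => 2 * (lam i' + ∑ j, (beta i' j + beta j i')) * ∑ τ ∈ Finset.Icc 1 (l - 1), aa m l * aa m τ)]
  -- part 3
  have h3 : ∑ i', ∑ j, beta i' j * Tpair k m (fun l => x' l i') (fun l => x' l j)
      = (∑ i', ∑ j, beta i' j * Tpair k m (fun l => x l i') (fun l => x l j))
        + (1 - 2 * x t i) * ∑ j, (beta i j + beta j i) * dd k m t 1 (fun l => x l j) := by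
    have hXi : (fun l => x' l i) = Function.update (fun l => x l i) t (1 - x t i) := by
      funext l
      rw [hx']
      by_cases h : l = t
      · subst h; simp
      · simp [h, Function.update_of_ne h]
    have hXj : ∀ j, j ≠ i → (fun l => x' l j) = (fun l => x l j) := by
      intro j hj; funext l; rw [hx']; simp [hj]
    have hTup : ∀ v : ℕ → ℝ, Tpair k m (Function.update (fun l => x l i) t (1 - x t i)) v
        = Tpair k m (fun l => x l i) v + (1 - 2 * x t i) * dd k m t 1 v := by
      intro v
      rw [Tpair_update k m (fun l => x l i) v t ht (1 - x t i)]
      have e1 : (1 : ℝ) - x t i + x t i = 1 := by ring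
      have e2 : (1 : ℝ) - x t i - x t i = 1 - 2 * x t i := by ring
      rw [e1, e2]
    have gi : ∑ j, beta i j * Tpair k m (fun l => x' l i) (fun l => x' l j)
        = (∑ j, beta i j * Tpair k m (fun l => x l i) (fun l => x l j))
          + (1 - 2 * x t i) * ∑ j, beta i j * dd k m t 1 (fun l => x l j) := by
      rw [Finset.mul_sum, ← Finset.sum_add_distrib]
      refine Finset.sum_congr rfl fun j _ => ?_
      by_cases hj : j = i
      · subst hj; rw [hdiag]; ring
      · rw [hXi, hXj j hj, hTup]; ring
    have gne : ∀ i', i' ≠ i → ∑ j, beta i' j * Tpair k m (fun l => x' l i') (fun l => x' l j)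
        = (∑ j, beta i' j * Tpair k m (fun l => x l i') (fun l => x l j))
          + (1 - 2 * x t i) * (beta i' i * dd k m t 1 (fun l => x l i')) := by
      intro i' hi'
      have per : ∀ j, beta i' j * Tpair k m (fun l => x' l i') (fun l => x' l j)
          = beta i' j * Tpair k m (fun l => x l i') (fun l => x l j)
            + (if j = i then (1 - 2 * x t i) * (beta i' i * dd k m t 1 (fun l => x l i')) else 0) := by
        intro j
        by_cases hj : j = i
        · rw [if_pos hj, hj, hXj i' hi', hXi,
            Tpair_symm k m (fun l => x l i') (Function.update (fun l => x l i) t (1 - x t i)),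
            hTup, Tpair_symm]
          ring
        · rw [if_neg hj, hXj i' hi', hXj j hj, add_zero]
      rw [Finset.sum_congr rfl fun j _ => per j, Finset.sum_add_distrib,
        Finset.sum_ite_eq' Finset.univ i]
      simp
    rw [← Finset.add_sum_erase _ _ (Finset.mem_univ i),
      ← Finset.add_sum_erase _
        (fun i' => ∑ j, beta i' j * Tpair k m (fun l => x l i') (fun l => x l j))
        (Finset.mem_univ i),
      gi, Finset.sum_congr rfl (fun i' hi' => gne i' (Finset.ne_of_mem_erase hi')),
      Finset.sum_add_distrib]
    have er : ∑ i' ∈ Finset.univ.erase i,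
          (1 - 2 * x t i) * (beta i' i * dd k m t 1 (fun l => x l i'))
        = ∑ i', (1 - 2 * x t i) * (beta i' i * dd k m t 1 (fun l => x l i')) := by
      refine Finset.sum_erase _ ?_
      rw [hdiag]
      ring
    rw [er]
    have fin : (1 - 2 * x t i) * (∑ j, beta i j * dd k m t 1 (fun l => x l j))
        + ∑ j, (1 - 2 * x t i) * (beta j i * dd k m t 1 (fun l => x l j))
        = (1 - 2 * x t i) * ∑ j, (beta i j + beta j i) * dd k m t 1 (fun l => x l j) := by
      rw [Finset.mul_sum, Finset.mul_sum, ← Finset.sum_add_distrib]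
      exact Finset.sum_congr rfl fun j _ => by ring
    linarith [fin]
  rw [h1, h2, h3]
  unfold Coef
  ring

lemma aa_pos (k : ℕ) (m : ℕ → ℤ) (hmono : ∀ l, l < k → m l < m (l + 1)) (t : ℕ)
    (h1 : 1 ≤ t) (h2 : t ≤ k) : 0 < aa m t := by
  unfold aa
  have h : m (t - 1) < m t := by
    have := hmono (t - 1) (by omega)
    rwa [show t - 1 + 1 = t by omega] at this
  have h' : ((m (t - 1) : ℤ) : ℝ) < ((m t : ℤ) : ℝ) := by exact_mod_cast h
  linarith

noncomputable def DD (k : ℕ) (f : V → ℤ) (m : ℕ → ℤ) (lam : V → ℝ) (beta : V → V → ℝ)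
    (x : ℕ → V → ℝ) (t : ℕ) (i : V) : ℝ :=
  lam i * (aa m t - 2 * ((f i : ℝ) - (m 0 : ℝ)))
    - ((m k : ℝ) - (m 0 : ℝ) - aa m t) * (∑ j, (beta i j + beta j i))
    + 2 * (lam i + ∑ j, (beta i j + beta j i)) * ∑ τ ∈ Finset.Icc 1 (t - 1), aa m τ
    + ∑ j, (beta i j + beta j i) *
        (2 * (∑ τ ∈ Finset.Icc 1 k, aa m τ * (1 - 2 * x τ j)) - aa m t * (1 - 2 * x t j))

lemma Coef_eq (k : ℕ) (f : V → ℤ) (m : ℕ → ℤ) (lam : V → ℝ) (beta : V → V → ℝ)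
    (x : ℕ → V → ℝ) (t : ℕ) (i : V) (ht : t ∈ Finset.Icc 1 k) :
    Coef k f m lam beta x t i = aa m t * DD k f m lam beta x t i := by
  unfold Coef DD KK
  have e2 : ∀ j : V, (beta i j + beta j i) * dd k m t 1 (fun l => x l j)
      = aa m t * ((beta i j + beta j i) *
          (2 * (∑ τ ∈ Finset.Icc 1 k, aa m τ * (1 - 2 * x τ j)) - aa m t * (1 - 2 * x t j))) := by
    intro j
    unfold dd
    rw [Finset.sum_erase_eq_sub ht]
    have e3 : ∑ τ ∈ Finset.Icc 1 k, aa m t * aa m τ * (1 - 2 * x τ j)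
        = aa m t * ∑ τ ∈ Finset.Icc 1 k, aa m τ * (1 - 2 * x τ j) := by
      rw [Finset.mul_sum]; exact Finset.sum_congr rfl fun τ _ => by ring
    rw [e3]
    ring
  rw [Finset.sum_congr rfl fun j _ => e2 j, ← Finset.mul_sum, ← Finset.mul_sum]
  ring

lemma DD_lt (k : ℕ) (f : V → ℤ) (m : ℕ → ℤ) (lam : V → ℝ) (beta : V → V → ℝ)
    (x : ℕ → V → ℝ) (i : V)
    (hlam : 0 < lam i) (hbeta : ∀ i j, 0 ≤ beta i j)
    (hmono : ∀ l, l < k → m l < m (l + 1)) (l l' : ℕ)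
    (hl1 : 1 ≤ l) (hll' : l < l') (hl'k : l' ≤ k)
    (hxl : ∀ j, 0 ≤ x l j ∧ x l j ≤ 1) (hxl' : ∀ j, 0 ≤ x l' j ∧ x l' j ≤ 1) :
    DD k f m lam beta x l i < DD k f m lam beta x l' i := by
  set ΔS := ∑ τ ∈ Finset.Ioc (l - 1) (l' - 1), aa m τ with hΔS
  have split : ∑ τ ∈ Finset.Icc 1 (l' - 1), aa m τ
      = (∑ τ ∈ Finset.Icc 1 (l - 1), aa m τ) + ΔS := by
    rw [show Finset.Icc 1 (l' - 1) = Finset.Ioc 0 (l' - 1) from Finset.Icc_add_one_left_eq_Ioc .., show Finset.Icc 1 (l - 1) = Finset.Ioc 0 (l - 1) from Finset.Icc_add_one_left_eq_Ioc .., hΔS]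
    exact (Finset.sum_Ioc_consecutive _ (by omega) (by omega)).symm
  have haal := aa_pos k m hmono l hl1 (by omega)
  have haal' := aa_pos k m hmono l' (by omega) hl'k
  have hΔ : aa m l ≤ ΔS := by
    refine Finset.single_le_sum (fun τ hτ => ?_) (Finset.mem_Ioc.mpr ⟨by omega, by omega⟩)
    rw [Finset.mem_Ioc] at hτ
    exact (aa_pos k m hmono τ (by omega) (by omega)).le
  clear_value ΔS
  have hSS : ∑ j, (beta i j + beta j i) *
        (2 * (∑ τ ∈ Finset.Icc 1 k, aa m τ * (1 - 2 * x τ j)) - aa m l' * (1 - 2 * x l' j))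
      = (∑ j, (beta i j + beta j i) *
          (2 * (∑ τ ∈ Finset.Icc 1 k, aa m τ * (1 - 2 * x τ j)) - aa m l * (1 - 2 * x l j)))
        + (∑ j, (beta i j + beta j i) * (2 * ΔS + 2 * aa m l' * x l' j - 2 * aa m l * x l j))
        - (aa m l' - aa m l + 2 * ΔS) * ∑ j, (beta i j + beta j i) := by
    rw [Finset.mul_sum Finset.univ (fun j => beta i j + beta j i) (aa m l' - aa m l + 2 * ΔS),
      ← Finset.sum_add_distrib, ← Finset.sum_sub_distrib]
    exact Finset.sum_congr rfl fun j _ => by ring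
  have hstep : DD k f m lam beta x l' i
      = DD k f m lam beta x l i
        + (lam i * (aa m l' - aa m l + 2 * ΔS)
          + ∑ j, (beta i j + beta j i) * (2 * ΔS + 2 * aa m l' * x l' j - 2 * aa m l * x l j)) := by
    unfold DD
    rw [split, hSS]
    ring
  have pos1 : 0 < lam i * (aa m l' - aa m l + 2 * ΔS) := by
    apply mul_pos hlam
    linarith
  have pos2 : 0 ≤ ∑ j, (beta i j + beta j i) * (2 * ΔS + 2 * aa m l' * x l' j - 2 * aa m l * x l j) := by
    refine Finset.sum_nonneg fun j _ => mul_nonneg (by linarith [hbeta i j, hbeta j i]) ?_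
    have t1 : 0 ≤ aa m l' * x l' j := mul_nonneg haal'.le (hxl' j).1
    have t2 : aa m l * x l j ≤ aa m l := by
      nlinarith [(hxl j).2, haal]
    linarith
  linarith [hstep, pos1, pos2]

end St16

/-- Any Boolean collection minimizing Q is coordinatewise non-increasing. -/
theorem stmt16 {V : Type} [Fintype V] (k : ℕ) (f : V → ℤ) (lam : V → ℝ)
    (hlam : ∀ i, 0 < lam i) (beta : V → V → ℝ) (hbeta : ∀ i j, 0 ≤ beta i j)
    (hdiag : ∀ i, beta i i = 0)
    (m : ℕ → ℤ) (hmono : ∀ l, l < k → m l < m (l + 1))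
    (q : ℕ → V → ℝ) (hqbool : ∀ l, 1 ≤ l → l ≤ k → IsBool (q l))
    (hqmin : ∀ q' : ℕ → V → ℝ, (∀ l, 1 ≤ l → l ≤ k → IsBool (q' l)) →
      Qpoly k f m lam beta q ≤ Qpoly k f m lam beta q') :
    ∀ l l', 1 ≤ l → l ≤ l' → l' ≤ k → ∀ i, q l' i ≤ q l i := by
  classical
  intro l l' hl1 hll' hl'k i
  by_contra hcon
  push_neg at hcon
  have hlk : l ≤ k := le_trans hll' hl'k
  have hl'1 : 1 ≤ l' := le_trans hl1 hll'
  have hbl := hqbool l hl1 hlk i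
  have hbl' := hqbool l' hl'1 hl'k i
  obtain ⟨h0, h1⟩ : q l i = 0 ∧ q l' i = 1 := by
    rcases hbl with h | h <;> rcases hbl' with h' | h'
    · exfalso; rw [h, h'] at hcon; linarith
    · exact ⟨h, h'⟩
    · exfalso; rw [h, h'] at hcon; linarith
    · exfalso; rw [h, h'] at hcon; linarith
  have hne : l ≠ l' := by
    intro he
    rw [he, h1] at h0
    norm_num at h0
  have hll : l < l' := lt_of_le_of_ne hll' hne
  have key : ∀ t, 1 ≤ t → t ≤ k →
      0 ≤ (1 - 2 * q t i) * St16.Coef k f m lam beta q t i := by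
    intro t ht1 htk
    have hb := St16.flipdiff k f m lam beta hdiag q t i (Finset.mem_Icc.mpr ⟨ht1, htk⟩)
      (fun τ j => if τ = t ∧ j = i then 1 - q t i else q τ j) (fun τ j => rfl)
    have hboolq' : ∀ τ, 1 ≤ τ → τ ≤ k →
        IsBool (fun j => if τ = t ∧ j = i then 1 - q t i else q τ j) := by
      intro τ hτ1 hτk j
      by_cases hc : τ = t ∧ j = i
      · simp only [if_pos hc]
        rcases hqbool t ht1 htk i with h | h <;> rw [h]
        · right; norm_num
        · left; norm_num
      · simp only [if_neg hc]
        exact hqbool τ hτ1 hτk j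
    have hmin := hqmin _ hboolq'
    rw [hb] at hmin
    linarith
  have k1 := key l hl1 hlk
  have k2 := key l' hl'1 hl'k
  rw [h0] at k1
  rw [h1] at k2
  rw [St16.Coef_eq k f m lam beta q l i (Finset.mem_Icc.mpr ⟨hl1, hlk⟩)] at k1
  rw [St16.Coef_eq k f m lam beta q l' i (Finset.mem_Icc.mpr ⟨hl'1, hl'k⟩)] at k2
  have hal := St16.aa_pos k m hmono l hl1 hlk
  have hal' := St16.aa_pos k m hmono l' hl'1 hl'k
  have dl : 0 ≤ St16.DD k f m lam beta q l i := by nlinarith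
  have dl' : St16.DD k f m lam beta q l' i ≤ 0 := by nlinarith
  have dlt := St16.DD_lt k f m lam beta q i (hlam i) hbeta hmono l l' hl1 hll hl'k
    (fun j => by rcases hqbool l hl1 hlk j with h | h <;> rw [h] <;> norm_num)
    (fun j => by rcases hqbool l' hl'1 hl'k j with h | h <;> rw [h] <;> norm_num)
  linarith
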